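/- Danskin-type differentiability of the optimal value along paths: let Y be a compact metric space, E a metric space, and F : Y × E → ℝ a jointly continuous function. Fix e_0 ∈ E, suppose y ↦ F(y, e_0) has a unique minimizer y(0), and suppose that along a given path {e_ε : ε ∈ [0,1]} ⊆ E with e_ε → e_0: (a) there exists a neighborhood N of y(0) and a function y ↦ D(y) continuous at y(0) such that lim_{(y,ε)→(y(0),0)} ([F(y, e_ε) − F(y, e_0)]/ε − D(y)) = 0 for y ∈ N. Then [min_{y∈Y} F(y, e_ε) − min_{y∈Y} F(y, e_0)]/ε → D(y(0)) as ε → 0. -/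
import Mathlib


open Filter Topology

noncomputable section

/-- Danskin-type differentiability of the optimal value along paths.
`Y` is a compact metric space, `F` jointly continuous, `y0` the unique minimizer of
`F(·, e 0)`, and along the path `ε ↦ e ε → e 0` the difference quotients
`[F(y, e ε) − F(y, e 0)]/ε` converge to `D y` jointly as `(y,ε) → (y0,0)` on a
neighborhood `N` of `y0`, with `D` continuous at `y0`. Then the difference quotient of
the optimal value converges to `D y0`. -/
theorem stmt11 {Y E : Type*} [MetricSpace Y] [CompactSpace Y] [Nonempty Y]
    [MetricSpace E] (F : Y → E → ℝ)
    (hF : Continuous fun q : Y × E => F q.1 q.2)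
    (e : ℝ → E) (he : Tendsto e (𝓝[>] (0:ℝ)) (𝓝 (e 0)))
    (y0 : Y) (hmin : ∀ y, F y0 (e 0) ≤ F y (e 0))
    (huniq : ∀ y, F y (e 0) = F y0 (e 0) → y = y0)
    (N : Set Y) (hN : N ∈ 𝓝 y0) (D : Y → ℝ) (hD : ContinuousAt D y0)
    (hlim : Tendsto (fun q : Y × ℝ => (F q.1 (e q.2) - F q.1 (e 0)) / q.2 - D q.1)
        (𝓝[N ×ˢ Set.Ioi (0:ℝ)] (y0, 0)) (𝓝 0)) :
    Tendsto (fun ε => ((⨅ y, F y (e ε)) - ⨅ y, F y (e 0)) / ε)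
      (𝓝[>] (0:ℝ)) (𝓝 (D y0)) := by
  have hFx : ∀ x : E, Continuous fun y => F y x := fun x =>
    hF.comp (continuous_id.prodMk continuous_const)
  -- selection of minimizers
  have hex : ∀ x : E, ∃ z : Y, ∀ y, F z x ≤ F y x := by
    intro x
    obtain ⟨z, -, hz⟩ := isCompact_univ.exists_isMinOn Set.univ_nonempty
      ((hFx x).continuousOn)
    exact ⟨z, fun y => hz (Set.mem_univ y)⟩
  choose sel hsel using hex
  have bdd : ∀ x : E, BddBelow (Set.range fun y => F y x) := by
    intro x
    exact ⟨F (sel x) x, by rintro r ⟨y, rfl⟩; exact hsel x y⟩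
  have hinf : ∀ x : E, ∀ z : Y, (∀ y, F z x ≤ F y x) → (⨅ y, F y x) = F z x := by
    intro x z hz
    exact le_antisymm (ciInf_le (bdd x) z) (le_ciInf hz)
  have hm0 : (⨅ y, F y (e 0)) = F y0 (e 0) := hinf _ _ hmin
  -- uniform convergence of F(·, e ε) to F(·, e 0)
  set G : C(E, C(Y, ℝ)) :=
    ContinuousMap.curry ⟨fun p : E × Y => F p.2 p.1,
      hF.comp (continuous_snd.prodMk continuous_fst)⟩ with hG
  have hGe : Tendsto (fun ε => G (e ε)) (𝓝[>] (0:ℝ)) (𝓝 (G (e 0))) :=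
    (G.continuous.continuousAt.tendsto).comp he
  have huc : ∀ δ : ℝ, 0 < δ →
      ∀ᶠ ε in 𝓝[>] (0:ℝ), ∀ y, |F y (e ε) - F y (e 0)| < δ := by
    intro δ hδ
    filter_upwards [hGe (Metric.ball_mem_nhds _ hδ)] with ε hε y
    have h1 : dist (G (e ε) y) (G (e 0) y) ≤ dist (G (e ε)) (G (e 0)) :=
      ContinuousMap.dist_apply_le_dist y
    have h2 : dist (G (e ε)) (G (e 0)) < δ := hε
    have : dist (F y (e ε)) (F y (e 0)) < δ := lt_of_le_of_lt h1 h2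
    simpa [Real.dist_eq] using this
  -- convergence of the selected minimizers
  have hsel_tend : Tendsto (fun ε => sel (e ε)) (𝓝[>] (0:ℝ)) (𝓝 y0) := by
    rw [tendsto_nhds]
    intro U hU hy0U
    by_cases hKne : (Uᶜ : Set Y).Nonempty
    · obtain ⟨z, hzK, hz⟩ := (hU.isClosed_compl.isCompact).exists_isMinOn hKne
        ((hFx (e 0)).continuousOn)
      have hzne : z ≠ y0 := fun h => hzK (h ▸ hy0U)
      have hlt : F y0 (e 0) < F z (e 0) :=
        lt_of_le_of_ne (hmin z) (fun h => hzne (huniq z h.symm))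
      set c := F z (e 0)
      set δ := (c - F y0 (e 0)) / 3 with hδdef
      have hδ : 0 < δ := by
        have := sub_pos.mpr hlt
        positivity
      filter_upwards [huc δ hδ] with ε hε
      by_contra hmem
      have hK : sel (e ε) ∈ (Uᶜ : Set Y) := hmem
      have h1 : c ≤ F (sel (e ε)) (e 0) := hz hK
      have h2 : F (sel (e ε)) (e 0) - F (sel (e ε)) (e ε) < δ :=
        lt_of_le_of_lt (le_abs_self _) (by simpa [abs_sub_comm] using hε (sel (e ε)))
      have h3 : F (sel (e ε)) (e ε) ≤ F y0 (e ε) := hsel _ _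
      have h4 : F y0 (e ε) - F y0 (e 0) < δ :=
        lt_of_le_of_lt (le_abs_self _) (hε y0)
      have : c < F y0 (e 0) + 2 * δ := by linarith
      rw [hδdef] at this
      linarith
    · push_neg at hKne
      have : (U : Set Y) = Set.univ := by
        rw [← Set.compl_empty_iff]
        exact Set.eq_empty_iff_forall_notMem.mpr (by simpa [Set.eq_empty_iff_forall_notMem] using hKne)
      filter_upwards with ε
      simp [this]
  have hεpos : ∀ᶠ ε in 𝓝[>] (0:ℝ), 0 < ε := self_mem_nhdsWithin
  have hy0N : y0 ∈ N := mem_of_mem_nhds hN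
  -- upper path: ε ↦ (y0, ε)
  have hpath0 : Tendsto (fun ε : ℝ => ((y0, ε) : Y × ℝ)) (𝓝[>] (0:ℝ))
      (𝓝[N ×ˢ Set.Ioi (0:ℝ)] (y0, 0)) := by
    rw [tendsto_nhdsWithin_iff]
    constructor
    · rw [nhds_prod_eq]
      exact (tendsto_const_nhds.prodMk (tendsto_id.mono_left nhdsWithin_le_nhds))
    · filter_upwards [hεpos] with ε hε
      exact ⟨hy0N, hε⟩
  have hupper : Tendsto (fun ε => (F y0 (e ε) - F y0 (e 0)) / ε) (𝓝[>] (0:ℝ))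
      (𝓝 (D y0)) := by
    have := (hlim.comp hpath0).add_const (D y0)
    simpa using this
  -- lower path: ε ↦ (sel (e ε), ε)
  have hmemN : ∀ᶠ ε in 𝓝[>] (0:ℝ), sel (e ε) ∈ N := hsel_tend hN
  have hpath1 : Tendsto (fun ε : ℝ => ((sel (e ε), ε) : Y × ℝ)) (𝓝[>] (0:ℝ))
      (𝓝[N ×ˢ Set.Ioi (0:ℝ)] (y0, 0)) := by
    rw [tendsto_nhdsWithin_iff]
    constructor
    · rw [nhds_prod_eq]
      exact hsel_tend.prodMk (tendsto_id.mono_left nhdsWithin_le_nhds)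
    · filter_upwards [hεpos, hmemN] with ε hε hN'
      exact ⟨hN', hε⟩
  have hDsel : Tendsto (fun ε => D (sel (e ε))) (𝓝[>] (0:ℝ)) (𝓝 (D y0)) :=
    hD.tendsto.comp hsel_tend
  have hlower : Tendsto (fun ε => (F (sel (e ε)) (e ε) - F (sel (e ε)) (e 0)) / ε)
      (𝓝[>] (0:ℝ)) (𝓝 (D y0)) := by
    have h := (hlim.comp hpath1).add hDsel
    simpa using h
  -- squeeze
  refine tendsto_of_tendsto_of_tendsto_of_le_of_le' hlower hupper ?_ ?_
  · filter_upwards [hεpos] with ε hε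
    have h1 : (⨅ y, F y (e ε)) = F (sel (e ε)) (e ε) := hinf _ _ (hsel _)
    have h2 : (⨅ y, F y (e 0)) ≤ F (sel (e ε)) (e 0) := ciInf_le (bdd _) _
    rw [h1]
    gcongr
  · filter_upwards [hεpos] with ε hε
    have h1 : (⨅ y, F y (e ε)) ≤ F y0 (e ε) := ciInf_le (bdd _) _
    rw [hm0]
    gcongr

end
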